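/- Let γ > 0, Λ ≥ 1, Λ₁ > 0, and let ε, ε̂, μ, μ̂ be positive real constants with Λ⁻¹ ≤ ε, μ, ε̂, μ̂ ≤ Λ, |μ − μ̂| ≥ Λ₁, and |ε/μ − ε̂/μ̂| ≥ Λ₁. Let α ∈ ℂ with α² ∈ ℝ and |α| = 1, and let k ∈ ℂ with |Im(k²)| ≥ γ|k|² and |Im(α²k²)| ≥ γ|k|² and |k| ≥ 1. Then there is a constant C > 0 depending only on γ, Λ, Λ₁ such that for all ξ ∈ ℝ², |(μ² − α²μ̂²)|ξ|² + α²k² ε ε̂ μ μ̂ (μ/ε − μ̂/ε̂)| ≥ C(|ξ|² + |k|²). -/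

import Mathlib

set_option maxHeartbeats 400000


/-- Second non-degeneracy estimate (pro-HS-em-2):
`|(μ² − α²μ̂²)|ξ|² + α²k² ε ε̂ μ μ̂ (μ/ε − μ̂/ε̂)| ≥ C(|ξ|² + |k|²)`. -/
theorem stmt_2 (γ Λ Λ₁ : ℝ) (hγ : 0 < γ) (hΛ : 1 ≤ Λ) (hΛ₁ : 0 < Λ₁) :
    ∃ C > 0, ∀ (ε μ εh μh : ℝ) (α k : ℂ),
      Λ⁻¹ ≤ ε → ε ≤ Λ → Λ⁻¹ ≤ μ → μ ≤ Λ →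
      Λ⁻¹ ≤ εh → εh ≤ Λ → Λ⁻¹ ≤ μh → μh ≤ Λ →
      Λ₁ ≤ |μ - μh| → Λ₁ ≤ |ε / μ - εh / μh| →
      (α ^ 2).im = 0 → ‖α‖ = 1 →
      γ * ‖k‖ ^ 2 ≤ |(k ^ 2).im| →
      γ * ‖k‖ ^ 2 ≤ |(α ^ 2 * k ^ 2).im| →
      1 ≤ ‖k‖ →
      ∀ ξ : EuclideanSpace ℝ (Fin 2),
        C * (‖ξ‖ ^ 2 + ‖k‖ ^ 2) ≤
          ‖(((μ : ℂ) ^ 2 - α ^ 2 * (μh : ℂ) ^ 2) * ((‖ξ‖ ^ 2 : ℝ) : ℂ) +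
            α ^ 2 * k ^ 2 * (ε : ℂ) * (εh : ℂ) * (μ : ℂ) * (μh : ℂ) *
              ((μ / ε - μh / εh : ℝ) : ℂ))‖ := by
  have hΛ0 : (0:ℝ) < Λ := by linarith
  have hΛi0 : (0:ℝ) < Λ⁻¹ := by positivity
  have hΛi1 : Λ⁻¹ ≤ 1 := by
    rw [inv_le_one_iff₀]; right; linarith
  set a : ℝ := min (2 * Λ⁻¹ ^ 2) (2 * Λ₁ / Λ) with ha_def
  have ha : 0 < a := lt_min (by positivity) (by positivity)
  have haa : a ≤ 2 * Λ⁻¹ ^ 2 := min_le_left _ _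
  have ha2 : a ≤ 2 := by
    have := pow_le_one₀ hΛi0.le hΛi1 (n := 2)
    linarith
  set M : ℝ := 4 * Λ ^ 6 / a with hM_def
  have hM0 : 0 < M := by positivity
  have hM2 : 2 ≤ M := by
    rw [hM_def, le_div_iff₀ ha]
    have h6 : 1 ≤ Λ ^ 6 := one_le_pow₀ hΛ
    linarith
  set C : ℝ := min (γ * (Λ⁻¹ ^ 4 * Λ₁) / (M + 1)) (a / 4) with hC_def
  have hC0 : 0 < C := lt_min (by positivity) (by positivity)
  refine ⟨C, hC0, ?_⟩
  intro ε μ εh μh α k hε1 hε2 hμ1 hμ2 hεh1 hεh2 hμh1 hμh2 hμμh hratio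
    hαim hαabs hk1 hk2 hkabs ξ
  have hε0 : 0 < ε := lt_of_lt_of_le hΛi0 hε1
  have hμ0 : 0 < μ := lt_of_lt_of_le hΛi0 hμ1
  have hεh0 : 0 < εh := lt_of_lt_of_le hΛi0 hεh1
  have hμh0 : 0 < μh := lt_of_lt_of_le hΛi0 hμh1
  set s : ℝ := (α ^ 2).re with hs_def
  have hα2 : α ^ 2 = ((s : ℝ) : ℂ) := by
    apply Complex.ext <;> simp [hs_def, hαim]
  have hsabs : |s| = 1 := by
    have h1 : ‖α ^ 2‖ = 1 := by
      rw [norm_pow, hαabs]; norm_num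
    rwa [hα2, Complex.norm_real, Real.norm_eq_abs] at h1
  set t : ℝ := ‖ξ‖ ^ 2 with ht_def
  have ht0 : 0 ≤ t := by positivity
  set K : ℝ := ‖k‖ ^ 2 with hK_def
  have hK1 : 1 ≤ K := by
    rw [hK_def]; exact one_le_pow₀ hkabs
  have hK0 : 0 < K := by linarith
  set B : ℝ := ε * εh * μ * μh * (μ / ε - μh / εh) with hB_def
  have hBeq : B = -((μ * μh) ^ 2 * (ε / μ - εh / μh)) := by
    rw [hB_def]; field_simp; ring
  have hBabs : |B| = (μ * μh) ^ 2 * |ε / μ - εh / μh| := by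
    rw [hBeq, abs_neg, abs_mul, abs_of_nonneg (by positivity : (0:ℝ) ≤ (μ * μh)^2)]
  have hBlow : Λ⁻¹ ^ 4 * Λ₁ ≤ |B| := by
    rw [hBabs]
    have h0 : Λ⁻¹ * Λ⁻¹ ≤ μ * μh := mul_le_mul hμ1 hμh1 hΛi0.le hμ0.le
    have h1 : Λ⁻¹ ^ 4 ≤ (μ * μh) ^ 2 := by
      have := pow_le_pow_left₀ (by positivity) h0 2
      calc Λ⁻¹ ^ 4 = (Λ⁻¹ * Λ⁻¹) ^ 2 := by ring
      _ ≤ (μ * μh) ^ 2 := this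
    exact mul_le_mul h1 hratio hΛ₁.le (by positivity)
  have hratio2 : |ε / μ - εh / μh| ≤ 2 * Λ ^ 2 := by
    have h1 : ε / μ ≤ Λ ^ 2 := by
      calc ε / μ ≤ Λ / Λ⁻¹ := div_le_div₀ hΛ0.le hε2 hΛi0 hμ1
      _ = Λ ^ 2 := by rw [div_eq_mul_inv, inv_inv]; ring
    have h2 : εh / μh ≤ Λ ^ 2 := by
      calc εh / μh ≤ Λ / Λ⁻¹ := div_le_div₀ hΛ0.le hεh2 hΛi0 hμh1
      _ = Λ ^ 2 := by rw [div_eq_mul_inv, inv_inv]; ring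
    have h3 : 0 ≤ ε / μ := by positivity
    have h4 : 0 ≤ εh / μh := by positivity
    have hΛ2 : 0 ≤ Λ ^ 2 := by positivity
    rw [abs_le]; constructor <;> linarith
  have hBhigh : |B| ≤ 2 * Λ ^ 6 := by
    rw [hBabs]
    have h0 : μ * μh ≤ Λ * Λ := mul_le_mul hμ2 hμh2 hμh0.le hΛ0.le
    have h1 : (μ * μh) ^ 2 ≤ Λ ^ 4 := by
      have := pow_le_pow_left₀ (by positivity) h0 2
      calc (μ * μh) ^ 2 ≤ (Λ * Λ) ^ 2 := this
      _ = Λ ^ 4 := by ring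
    calc (μ * μh) ^ 2 * |ε / μ - εh / μh| ≤ Λ ^ 4 * (2 * Λ ^ 2) :=
      mul_le_mul h1 hratio2 (abs_nonneg _) (by positivity)
    _ = 2 * Λ ^ 6 := by ring
  set A : ℝ := μ ^ 2 - s * μh ^ 2 with hA_def
  have hAlow : a ≤ |A| := by
    rcases abs_eq (by norm_num : (0:ℝ) ≤ 1) |>.mp hsabs with hs1 | hs1
    · -- s = 1 : |μ² - μ̂²| = |μ-μ̂|(μ+μ̂) ≥ Λ₁ · 2/Λ
      have : |A| = |μ - μh| * (μ + μh) := by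
        rw [hA_def, hs1]
        have : μ ^ 2 - 1 * μh ^ 2 = (μ - μh) * (μ + μh) := by ring
        rw [this, abs_mul, abs_of_pos (by linarith : 0 < μ + μh)]
      rw [this]
      have h2 : 2 * Λ₁ / Λ ≤ Λ₁ * (μ + μh) := by
        rw [div_le_iff₀ hΛ0]
        have hinv : Λ⁻¹ * Λ = 1 := inv_mul_cancel₀ (ne_of_gt hΛ0)
        have hsum : 2 ≤ (μ + μh) * Λ := by
          have := mul_le_mul_of_nonneg_right
            (by linarith : 2 * Λ⁻¹ ≤ μ + μh) hΛ0.le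
          linarith
        have := mul_le_mul_of_nonneg_left hsum hΛ₁.le
        linarith
      have h3 : Λ₁ * (μ + μh) ≤ |μ - μh| * (μ + μh) :=
        mul_le_mul_of_nonneg_right hμμh (by linarith)
      have := min_le_right (2 * Λ⁻¹ ^ 2) (2 * Λ₁ / Λ)
      linarith
    · -- s = -1 : A = μ² + μ̂² ≥ 2Λ⁻²
      have hApos : A = μ ^ 2 + μh ^ 2 := by rw [hA_def, hs1]; ring
      have hsq1 : Λ⁻¹ ^ 2 ≤ μ ^ 2 := pow_le_pow_left₀ hΛi0.le hμ1 2
      have hsq2 : Λ⁻¹ ^ 2 ≤ μh ^ 2 := pow_le_pow_left₀ hΛi0.le hμh1 2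
      have hA2 : 2 * Λ⁻¹ ^ 2 ≤ A := by rw [hApos]; linarith
      have hsq0 : 0 < Λ⁻¹ ^ 2 := by positivity
      rw [abs_of_pos (by linarith)]
      linarith [min_le_left (2 * Λ⁻¹ ^ 2) (2 * Λ₁ / Λ)]
  set z : ℂ := ((μ : ℂ) ^ 2 - α ^ 2 * (μh : ℂ) ^ 2) * ((‖ξ‖ ^ 2 : ℝ) : ℂ) +
      α ^ 2 * k ^ 2 * (ε : ℂ) * (εh : ℂ) * (μ : ℂ) * (μh : ℂ) *
        ((μ / ε - μh / εh : ℝ) : ℂ) with hz_def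
  have hz : z = ((A * t : ℝ) : ℂ) + ((s * B : ℝ) : ℂ) * k ^ 2 := by
    rw [hz_def, hα2, hA_def, hB_def, ht_def]
    push_cast
    ring
  have hzre : z.re = A * t + s * B * (k ^ 2).re := by
    rw [hz]; simp
  have hzim : z.im = s * B * (k ^ 2).im := by
    rw [hz]; simp
  -- bound on |Im z|
  have hk2im : γ * K ≤ |(k ^ 2).im| := by
    have h1 : (α ^ 2 * k ^ 2).im = s * (k ^ 2).im := by
      rw [hα2]; simp
    rw [h1, abs_mul, hsabs, one_mul] at hk2
    exact hk2
  have hIm : Λ⁻¹ ^ 4 * Λ₁ * (γ * K) ≤ |z.im| := by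
    rw [hzim, abs_mul, abs_mul, hsabs, one_mul]
    exact mul_le_mul hBlow hk2im (by positivity) (abs_nonneg B)
  -- bound on |Re z|
  have hk2re : |(k ^ 2).re| ≤ K := by
    calc |(k ^ 2).re| ≤ ‖k ^ 2‖ := Complex.abs_re_le_norm _
    _ = K := by rw [norm_pow]
  have hRe : |A| * t - |B| * K ≤ |z.re| := by
    rw [hzre]
    have h1 : |A * t| - |s * B * (k ^ 2).re| ≤ |A * t + s * B * (k ^ 2).re| := by
      have := abs_sub_abs_le_abs_sub (A * t) (-(s * B * (k ^ 2).re))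
      simpa [sub_neg_eq_add] using this
    have h2 : |A * t| = |A| * t := by rw [abs_mul, abs_of_nonneg ht0]
    have h3 : |s * B * (k ^ 2).re| = |B| * |(k ^ 2).re| := by
      rw [abs_mul, abs_mul, hsabs, one_mul]
    have h4 : |B| * |(k ^ 2).re| ≤ |B| * K := by
      exact mul_le_mul_of_nonneg_left hk2re (abs_nonneg B)
    linarith
  have habsre := Complex.abs_re_le_norm z
  have habsim := Complex.abs_im_le_norm z
  show C * (t + K) ≤ ‖z‖
  by_cases hcase : t ≤ M * K
  · -- use imaginary part
    have h1 : C * (t + K) ≤ γ * (Λ⁻¹ ^ 4 * Λ₁) / (M + 1) * ((M + 1) * K) := by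
      have hCle : C ≤ γ * (Λ⁻¹ ^ 4 * Λ₁) / (M + 1) := min_le_left _ _
      have h2 : t + K ≤ (M + 1) * K := by linarith
      exact mul_le_mul hCle h2 (by linarith) (by positivity)
    have h4 : γ * (Λ⁻¹ ^ 4 * Λ₁) / (M + 1) * ((M + 1) * K) = Λ⁻¹ ^ 4 * Λ₁ * (γ * K) := by
      field_simp
    calc C * (t + K) ≤ Λ⁻¹ ^ 4 * Λ₁ * (γ * K) := by rw [← h4]; exact h1
    _ ≤ |z.im| := hIm
    _ ≤ ‖z‖ := habsim
  · -- use real part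
    push_neg at hcase
    have hMK : M * K < t := hcase
    have h2 : |B| * K ≤ 2 * Λ ^ 6 * K :=
      mul_le_mul_of_nonneg_right hBhigh hK0.le
    have h3 : 2 * Λ ^ 6 * K ≤ (a / 2) * t := by
      have heq : 2 * Λ ^ 6 * K = (a / 2) * (M * K) := by
        rw [hM_def]; field_simp; ring
      rw [heq]
      exact mul_le_mul_of_nonneg_left hMK.le (by positivity)
    have h4 : (a / 2) * t ≤ |A| * t - |B| * K := by
      have := mul_le_mul_of_nonneg_right hAlow ht0
      linarith
    have h5 : C * (t + K) ≤ (a / 2) * t := by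
      have hCle : C ≤ a / 4 := min_le_right _ _
      have h7 : t + K ≤ 2 * t := by
        have := mul_le_mul_of_nonneg_right hM2 hK0.le
        linarith
      have := mul_le_mul hCle h7 (by linarith) (by positivity)
      linarith
    calc C * (t + K) ≤ (a / 2) * t := h5
    _ ≤ |A| * t - |B| * K := h4
    _ ≤ |z.re| := hRe
    _ ≤ ‖z‖ := habsre
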